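/- Let G = ⊕_p ℤ[1/p] be the direct sum over all primes p of the additive groups of p-adic rationals. Then the group of additive automorphisms of G is isomorphic to the direct product over all primes p of the groups of additive automorphisms of ℤ[1/p]: AddAut(G) ≅ Π_p AddAut(ℤ[1/p]). -/

import Mathlib

open DirectSum

/-- For a prime `p`, the additive subgroup `ℤ[1/p] ⊆ ℚ` of `p`-adic rationals,
consisting of all rationals of the form `m / p ^ n` with `m : ℤ` and `n : ℕ`. -/
def padicRationals (p : ℕ) (hp : p.Prime) : AddSubgroup ℚ where
  carrier := {x : ℚ | ∃ m : ℤ, ∃ n : ℕ, x = (m : ℚ) / (p : ℚ) ^ n}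
  zero_mem' := ⟨0, 0, by simp⟩
  add_mem' := by
    rintro a b ⟨m₁, n₁, rfl⟩ ⟨m₂, n₂, rfl⟩
    have hp0 : (p : ℚ) ≠ 0 := by exact_mod_cast hp.ne_zero
    refine ⟨m₁ * (p : ℤ) ^ n₂ + m₂ * (p : ℤ) ^ n₁, n₁ + n₂, ?_⟩
    push_cast
    rw [pow_add]
    field_simp
  neg_mem' := by
    rintro a ⟨m, n, rfl⟩
    exact ⟨-m, n, by push_cast; ring⟩

lemma padic_hom_apply_eq_zero {p q : ℕ} (hp : p.Prime) (hq : q.Prime) (hpq : p ≠ q)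
    (f : padicRationals p hp →+ padicRationals q hq) (x : padicRationals p hp) :
    f x = 0 := by
  obtain ⟨m, n, hx⟩ := x.2
  obtain ⟨a, b, hfx⟩ := (f x).2
  have hp0 : (p : ℚ) ≠ 0 := by exact_mod_cast hp.ne_zero
  have hq0 : (q : ℚ) ≠ 0 := by exact_mod_cast hq.ne_zero
  have key : ∀ k : ℕ, (p : ℤ) ^ k ∣ a := by
    intro k
    have hy : ((m : ℚ) / (p : ℚ) ^ (n + k)) ∈ padicRationals p hp := ⟨m, n + k, rfl⟩
    set y : padicRationals p hp := ⟨_, hy⟩ with hy_def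
    have hxy : ((p : ℤ) ^ k) • y = x := by
      apply Subtype.ext
      have : ((((p : ℤ) ^ k) • y : padicRationals p hp) : ℚ)
          = ((p : ℚ) ^ k) * ((m : ℚ) / (p : ℚ) ^ (n + k)) := by
        push_cast [AddSubgroup.coe_zsmul, zsmul_eq_mul]
        ring
      rw [this, hx, pow_add]
      field_simp
    obtain ⟨c, d, hfy⟩ := (f y).2
    have h2 : (a : ℚ) / (q : ℚ) ^ b = (p : ℚ) ^ k * ((c : ℚ) / (q : ℚ) ^ d) := by
      have h3 : ((f x : padicRationals q hq) : ℚ) = ((p : ℚ) ^ k) * ((f y : padicRationals q hq) : ℚ) := by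
        rw [← hxy, map_zsmul]
        push_cast [AddSubgroup.coe_zsmul, zsmul_eq_mul]
        ring
      rw [hfx, hfy] at h3
      exact h3
    have hZ : (a : ℤ) * (q : ℤ) ^ d = (p : ℤ) ^ k * c * (q : ℤ) ^ b := by
      have h4 : (a : ℚ) * (q : ℚ) ^ d = (p : ℚ) ^ k * c * (q : ℚ) ^ b := by
        field_simp at h2
        linarith [h2]
      exact_mod_cast h4
    have hcop : IsCoprime ((p : ℤ) ^ k) ((q : ℤ) ^ d) := by
      have : Nat.Coprime p q := (Nat.coprime_primes hp hq).mpr hpq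
      exact (Nat.Coprime.isCoprime this).pow
    exact hcop.dvd_of_dvd_mul_right ⟨c * (q : ℤ) ^ b, by rw [hZ]; ring⟩
  have ha : a = 0 := by
    by_contra h
    have hk := key (a.natAbs + 1)
    have h1 : (p : ℤ) ^ (a.natAbs + 1) ≤ |a| :=
      Int.le_of_dvd (abs_pos.mpr h) ((dvd_abs _ _).mpr hk)
    have h2 : a.natAbs < p ^ (a.natAbs + 1) := by
      calc a.natAbs < 2 ^ (a.natAbs + 1) := (Nat.lt_two_pow_self).trans (Nat.pow_lt_pow_succ one_lt_two)
        _ ≤ p ^ (a.natAbs + 1) := Nat.pow_le_pow_left hp.two_le _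
    have h3 : |a| < (p : ℤ) ^ (a.natAbs + 1) := by
      rw [Int.abs_eq_natAbs]
      exact_mod_cast h2
    linarith
  apply Subtype.ext
  rw [hfx, ha]
  simp

namespace PadicAutProof

abbrev A (q : Nat.Primes) : Type := padicRationals q.1 q.2

abbrev G : Type := ⨁ (q : Nat.Primes), A q

/-- component `p` of `φ` applied to generators. -/
def e (φ : AddAut G) (p : Nat.Primes) : A p →+ A p :=
  (DFinsupp.evalAddMonoidHom p).comp
    (φ.toAddMonoidHom.comp (DirectSum.of A p))

lemma of_e (φ : AddAut G) (p : Nat.Primes) (x : A p) :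
    φ (DirectSum.of A p x) = DirectSum.of A p (e φ p x) := by
  refine DFinsupp.ext fun q => ?_
  by_cases h : p = q
  · subst h
    rw [DirectSum.of_eq_same]
    rfl
  · rw [DirectSum.of_eq_of_ne _ _ _ (Ne.symm h)]
    have hz := padic_hom_apply_eq_zero p.2 q.2 (fun hh => h (Subtype.ext hh))
      ((DFinsupp.evalAddMonoidHom q).comp (φ.toAddMonoidHom.comp (DirectSum.of A p))) x
    exact hz

lemma e_mul (φ ψ : AddAut G) (p : Nat.Primes) (x : A p) :
    e (φ + ψ) p x = e φ p (e ψ p x) := by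
  show (φ (ψ (DirectSum.of A p x))) p = (φ (DirectSum.of A p (e ψ p x))) p
  rw [of_e ψ]

lemma e_one (p : Nat.Primes) (x : A p) : e 0 p x = x := by
  show ((DirectSum.of A p x : G)) p = x
  rw [DirectSum.of_eq_same]

/-- `e φ p` as an automorphism. -/
def eAut (φ : AddAut G) (p : Nat.Primes) : AddAut (A p) where
  toFun := e φ p
  invFun := e (-φ) p
  left_inv := fun x => by rw [← e_mul, neg_add_cancel, e_one]
  right_inv := fun x => by rw [← e_mul, add_neg_cancel, e_one]
  map_add' := (e φ p).map_add

def Ψ : AddAut G →+ ((q : Nat.Primes) → AddAut (A q)) where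
  toFun φ := fun p => eAut φ p
  map_zero' := by
    funext p
    exact AddEquiv.ext fun x => e_one p x
  map_add' φ ψ := by
    funext p
    exact AddEquiv.ext fun x => e_mul φ ψ p x

lemma Ψ_bijective : Function.Bijective Ψ := by
  constructor
  · intro φ ψ h
    have h' : ∀ p x, e φ p x = e ψ p x := fun p x =>
      congrArg (fun (f : (q : Nat.Primes) → AddAut (A q)) => f p x) h
    apply AddEquiv.ext
    have := DirectSum.addHom_ext (γ := G) (f := φ.toAddMonoidHom) (g := ψ.toAddMonoidHom)
      (fun p x => by rw [show φ.toAddMonoidHom (DirectSum.of A p x) = _ from of_e φ p x,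
        show ψ.toAddMonoidHom (DirectSum.of A p x) = _ from of_e ψ p x, h' p x])
    exact fun z => congrArg (fun (f : G →+ G) => f z) this
  · intro f
    refine ⟨(DFinsupp.mapRange.addEquiv (fun p => f p) : AddAut G), ?_⟩
    funext p
    apply AddEquiv.ext
    intro x
    show (DFinsupp.mapRange.addEquiv (fun p => f p) (DirectSum.of A p x)) p = f p x
    classical
    have : (DFinsupp.mapRange.addEquiv (fun p => f p) (DirectSum.of A p x)) =
        DirectSum.of A p (f p x) := by
      show DFinsupp.mapRange (fun p y => f p y) (fun p => map_zero (f p))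
          (DFinsupp.single p x) = DFinsupp.single p (f p x)
      exact DFinsupp.mapRange_single
    rw [this, DirectSum.of_eq_same]

end PadicAutProof

/-- The automorphism group of `G = ⊕_p ℤ[1/p]` is isomorphic to the direct product
`Π_p AddAut (ℤ[1/p])` of the automorphism groups of the components. -/
theorem addAut_directSum_mulEquiv_pi :
    Nonempty ((AddAut (⨁ (q : Nat.Primes), padicRationals q.1 q.2)) ≃+
      ((q : Nat.Primes) → AddAut (padicRationals q.1 q.2))) := by
  exact ⟨AddEquiv.ofBijective PadicAutProof.Ψ PadicAutProof.Ψ_bijective⟩
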